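/- Let F = 3·z₀²z₁²z₂² − (z₀⁵z₁ + z₂⁵z₀ + z₁⁵z₂). The set of nonzero points of ℂ³ at which all three partial derivatives ∂F/∂z₀, ∂F/∂z₁, ∂F/∂z₂ vanish is exactly { c·(λᵏ, λ²ᵏ, λ⁴ᵏ) : c ∈ ℂ ∖ {0}, k ∈ {0,1,…,6} }, where λ = exp(2πi/7). In particular, the plane projective sextic curve {F = 0} has exactly seven singular points, and these form a single orbit of the projective transformation [z₀:z₁:z₂] ↦ [λz₀ : λ²z₁ : λ⁴z₂] through the point [1:1:1]. -/

import Mathlib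

open MvPolynomial

noncomputable def lam : ℂ := Complex.exp (2 * Real.pi * Complex.I / 7)

/-- The singular sextic `F = 3·z₀²z₁²z₂² − (z₀⁵z₁ + z₂⁵z₀ + z₁⁵z₂)`. -/
noncomputable def Fsing : MvPolynomial (Fin 3) ℂ :=
  3 * (X 0 ^ 2 * X 1 ^ 2 * X 2 ^ 2) - (X 0 ^ 5 * X 1 + X 2 ^ 5 * X 0 + X 1 ^ 5 * X 2)

/-- The point `(λᵏ, λ²ᵏ, λ⁴ᵏ) ∈ ℂ³`. -/
noncomputable def pPoint (k : ℕ) : Fin 3 → ℂ := ![lam ^ k, lam ^ (2 * k), lam ^ (4 * k)]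

lemma lam_prim : IsPrimitiveRoot lam 7 := by
  have := Complex.isPrimitiveRoot_exp 7 (by norm_num)
  simpa [lam] using this

lemma lam_ne_zero : lam ≠ 0 := Complex.exp_ne_zero _

lemma lam_pow_seven : lam ^ 7 = 1 := lam_prim.pow_eq_one

lemma pd3 (i : Fin 3) : pderiv i (3 : MvPolynomial (Fin 3) ℂ) = 0 := by
  have : (3 : MvPolynomial (Fin 3) ℂ) = C 3 := by rw [map_ofNat]
  rw [this, pderiv_C]

lemma eval_pd0 (v : Fin 3 → ℂ) : eval v (pderiv 0 Fsing) =
    6 * v 0 * (v 1)^2 * (v 2)^2 - 5*(v 0)^4 * v 1 - (v 2)^5 := by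
  simp [Fsing, pderiv_mul, pderiv_pow, pderiv_X, pd3]; ring

lemma eval_pd1 (v : Fin 3 → ℂ) : eval v (pderiv 1 Fsing) =
    6 * (v 0)^2 * v 1 * (v 2)^2 - (v 0)^5 - 5*(v 1)^4 * v 2 := by
  simp [Fsing, pderiv_mul, pderiv_pow, pderiv_X, pd3]; ring

lemma eval_pd2 (v : Fin 3 → ℂ) : eval v (pderiv 2 Fsing) =
    6 * (v 0)^2 * (v 1)^2 * v 2 - 5*(v 2)^4 * v 0 - (v 1)^5 := by
  simp [Fsing, pderiv_mul, pderiv_pow, pderiv_X, pd3]; ring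

lemma lam_pow_k_pow_seven (k : ℕ) : (lam ^ k) ^ 7 = 1 := by
  rw [← pow_mul, mul_comm, pow_mul, lam_pow_seven, one_pow]

/-- The nonzero common zeros of the partial derivatives of `F` are exactly the points
`c·(λᵏ, λ²ᵏ, λ⁴ᵏ)` with `c ≠ 0` and `0 ≤ k ≤ 6`; moreover these seven points give seven
pairwise distinct projective classes, so the projective curve `{F = 0}` has exactly seven
singular points, forming one orbit of `[z₀:z₁:z₂] ↦ [λz₀:λ²z₁:λ⁴z₂]` through `[1:1:1]`. -/
theorem singular_points_of_Fsing :
    ({v : Fin 3 → ℂ | v ≠ 0 ∧ ∀ i : Fin 3, eval v (pderiv i Fsing) = 0} =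
      {v : Fin 3 → ℂ | ∃ c : ℂ, c ≠ 0 ∧ ∃ k : Fin 7, v = c • pPoint (k : ℕ)}) ∧
    (∀ k l : Fin 7, k ≠ l → ¬∃ c : ℂ, pPoint (l : ℕ) = c • pPoint (k : ℕ)) := by
  constructor
  · ext v
    simp only [Set.mem_setOf_eq]
    constructor
    · rintro ⟨hv, hder⟩
      have h0 := hder 0
      have h1 := hder 1
      have h2 := hder 2
      rw [eval_pd0] at h0
      rw [eval_pd1] at h1
      rw [eval_pd2] at h2
      set a := v 0 with ha'
      set b := v 1 with hb'
      set c := v 2 with hc'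
      -- all coordinates are nonzero
      have ha : a ≠ 0 := by
        intro h
        have hc0 : c = 0 := by
          have : c ^ 5 = 0 := by linear_combination -h0 + (6*b^2*c^2 - 5*a^3*b)*h
          exact pow_eq_zero_iff (by norm_num) |>.mp this
        have hb0 : b = 0 := by
          have : b ^ 5 = 0 := by
            linear_combination -h2 + (6*a*b^2*c - 5*c^4)*h
          exact pow_eq_zero_iff (by norm_num) |>.mp this
        apply hv
        funext i
        fin_cases i <;> simp_all
      have hb : b ≠ 0 := by
        intro h
        have ha0 : a = 0 := by
          have : a ^ 5 = 0 := by linear_combination -h1 + (6*a^2*c^2 - 5*b^3*c)*h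
          exact pow_eq_zero_iff (by norm_num) |>.mp this
        exact ha ha0
      have hc : c ≠ 0 := by
        intro h
        have hb0 : b = 0 := by
          have : b ^ 5 = 0 := by linear_combination -h2 + (6*a^2*b^2 - 5*c^3*a)*h
          exact pow_eq_zero_iff (by norm_num) |>.mp this
        exact hb hb0
      -- the key monomial identities
      have hB : b^5*c = a^2*b^2*c^2 := by
        linear_combination (5/126*a) * h0 + (-25/126*b) * h1 + (-1/126*c) * h2
      have hC : c^5*a = a^2*b^2*c^2 := by
        linear_combination (-1/126*a) * h0 + (5/126*b) * h1 + (-25/126*c) * h2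
      -- reduced identities
      have e1 : b^3 = a^2*c :=
        mul_left_cancel₀ (mul_ne_zero (pow_ne_zero 2 hb) hc)
          (show (b^2*c) * b^3 = (b^2*c) * (a^2*c) by linear_combination hB)
      have e2 : c^3 = a*b^2 :=
        mul_left_cancel₀ (mul_ne_zero (pow_ne_zero 2 hc) ha)
          (show (c^2*a) * c^3 = (c^2*a) * (a*b^2) by linear_combination hC)
      have hb7 : b^7 = a^7 :=
        mul_right_cancel₀ (pow_ne_zero 2 hb)
          (show b^7 * b^2 = a^7 * b^2 by
            linear_combination (b^6 + a^2*c*b^3 + a^4*c^2) * e1 + a^6 * e2)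
      -- extract the root of unity
      have hz7 : (b / a) ^ 7 = 1 := by
        rw [div_pow, hb7, div_self (pow_ne_zero 7 ha)]
      obtain ⟨k, hk7, hk⟩ := lam_prim.eq_pow_of_pow_eq_one hz7
      have hlk : lam ^ k ≠ 0 := pow_ne_zero _ lam_ne_zero
      have hbval : b = lam ^ k * a := by
        rw [hk]; field_simp
      have hcval : c = (lam ^ k) ^ 3 * a := by
        refine mul_left_cancel₀ (pow_ne_zero 2 ha) ?_
        linear_combination (b^2 + lam^k*a*b + (lam^k)^2*a^2) * hbval - e1
      refine ⟨a / lam ^ k, div_ne_zero ha hlk, ⟨k, hk7⟩, ?_⟩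
      funext i
      fin_cases i <;>
        simp only [pPoint, Pi.smul_apply, smul_eq_mul, Matrix.cons_val_zero,
          Matrix.cons_val_one, Matrix.head_cons, Matrix.cons_val_two, Matrix.tail_cons]
      · show a = a / lam ^ k * lam ^ k
        field_simp
      · show b = a / lam ^ k * lam ^ (2 * k)
        rw [hbval]; field_simp; ring
      · show c = a / lam ^ k * lam ^ (4 * k)
        rw [hcval]; field_simp; ring
    · rintro ⟨c, hc, k, rfl⟩
      have hlk : lam ^ (k : ℕ) ≠ 0 := pow_ne_zero _ lam_ne_zero
      have hv0 : (c • pPoint (k : ℕ)) 0 = c * lam ^ (k : ℕ) := by simp [pPoint]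
      have hv1 : (c • pPoint (k : ℕ)) 1 = c * (lam ^ (k : ℕ)) ^ 2 := by
        simp [pPoint, mul_comm 2 (k : ℕ), pow_mul]
      have hv2 : (c • pPoint (k : ℕ)) 2 = c * (lam ^ (k : ℕ)) ^ 4 := by
        simp [pPoint, mul_comm 4 (k : ℕ), pow_mul]
      have ht : (lam ^ (k : ℕ)) ^ 7 = 1 := lam_pow_k_pow_seven _
      set t := lam ^ (k : ℕ) with htdef
      constructor
      · intro h
        have := congrFun h 0
        rw [hv0] at this
        exact (mul_ne_zero hc hlk) (by simpa using this)
      · intro i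
        fin_cases i
        · show eval (c • pPoint (k : ℕ)) (pderiv 0 Fsing) = 0
          rw [eval_pd0, hv0, hv1, hv2]
          linear_combination (c^5*t^6*(5 - t^7)) * ht
        · show eval (c • pPoint (k : ℕ)) (pderiv 1 Fsing) = 0
          rw [eval_pd1, hv0, hv1, hv2]
          linear_combination (c^5*t^5) * ht
        · show eval (c • pPoint (k : ℕ)) (pderiv 2 Fsing) = 0
          rw [eval_pd2, hv0, hv1, hv2]
          linear_combination (-5*c^5*t^10) * ht
  · rintro k l hkl ⟨c, hcl⟩
    have e0 := congrFun hcl 0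
    have e1 := congrFun hcl 1
    simp only [pPoint, Pi.smul_apply, smul_eq_mul, Matrix.cons_val_zero,
      Matrix.cons_val_one, Matrix.head_cons] at e0 e1
    rw [mul_comm 2 (l : ℕ), pow_mul, mul_comm 2 (k : ℕ), pow_mul] at e1
    have htk : lam ^ (k : ℕ) ≠ 0 := pow_ne_zero _ lam_ne_zero
    have htl : lam ^ (l : ℕ) ≠ 0 := pow_ne_zero _ lam_ne_zero
    have hc : c ≠ 0 := by
      intro h
      exact htl (by rw [e0, h, zero_mul])
    have hc2 : c ^ 2 * (lam ^ (k : ℕ)) ^ 2 = c * (lam ^ (k : ℕ)) ^ 2 := by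
      linear_combination e1 - (lam ^ (l : ℕ) + c * lam ^ (k : ℕ)) * e0
    have hc1 : c = 1 := by
      have h2 : c ^ 2 = c := mul_right_cancel₀ (pow_ne_zero 2 htk) hc2
      have := mul_left_cancel₀ hc (show c * c = c * 1 by linear_combination h2)
      exact this
    rw [hc1, one_mul] at e0
    exact hkl (Fin.ext (lam_prim.pow_inj k.isLt l.isLt e0.symm))
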